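/- arXiv:1210.2358 — 2 statements merged into one kernel-verified Lean document; each statement's English description precedes it below -/
import Mathlib

section
/- For every integer k ≥ 1, the function Λ_k is differentiable on the real interval (0,1), and for all t ∈ (0,1) its derivative is Λ_k′(t) = (−2πi)^{−k} · (−log t)^{k−1} / ((k−1)! · (1−t)). (This differential identity is the computational content of the fact that f = 1 + Σ_{k≥1} Λ_k·e^k is a global, i.e. single-valued holomorphic, section of the polylogarithm variation tensored with the structure sheaf.) -/
open scoped Nat

/-- The polylogarithm power series `Li_j(t) = ∑_{k ≥ 1} t^k / k^j` for real `t ∈ (0,1)`,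
viewed as a complex number. -/
noncomputable def LiSeries (j : ℕ) (t : ℝ) : ℂ :=
  ∑' k : ℕ, (t : ℂ) ^ (k + 1) / ((k + 1 : ℕ) : ℂ) ^ j

/-- `Λ_k(t) = (1/(-2πi)^k) ∑_{n=1}^{k} ((-log t)^{k-n} / (k-n)!) · Li_n(t)`.
(The sum is written over `m = n - 1 ∈ {0, …, k-1}`.) -/
noncomputable def Lambda (k : ℕ) (t : ℝ) : ℂ :=
  (1 / (-(2 * Real.pi * Complex.I)) ^ k) *
    ∑ m ∈ Finset.range k,
      ((-Real.log t : ℂ) ^ (k - (m + 1)) / (Nat.factorial (k - (m + 1)) : ℂ)) *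
        LiSeries (m + 1) t

lemma term_hasDerivAt (j k : ℕ) (s : ℝ) :
    HasDerivAt (fun s : ℝ => (s : ℂ) ^ (k + 1) / ((k + 1 : ℕ) : ℂ) ^ j)
      (((k + 1 : ℕ) : ℂ) * (s : ℂ) ^ k / ((k + 1 : ℕ) : ℂ) ^ j) s := by
  have h1 := ((hasDerivAt_pow (k + 1) ((s : ℂ))).comp_ofReal).div_const (((k + 1 : ℕ) : ℂ) ^ j)
  simpa [mul_comm, Nat.cast_add] using h1

lemma hasDerivAt_LiSeries (j : ℕ) {t : ℝ} (ht : t ∈ Set.Ioo (0 : ℝ) 1) :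
    HasDerivAt (fun s : ℝ => LiSeries j s)
      (∑' k : ℕ, ((k + 1 : ℕ) : ℂ) * (t : ℂ) ^ k / ((k + 1 : ℕ) : ℂ) ^ j) t := by
  obtain ⟨ht0, ht1⟩ := ht
  set ρ : ℝ := (1 + t) / 2 with hρ
  have hρ1 : ρ < 1 := by rw [hρ]; linarith
  have htρ : t < ρ := by rw [hρ]; linarith
  have hρ0 : 0 < ρ := by rw [hρ]; linarith
  have hsum : Summable (fun k : ℕ => ((k : ℝ) + 1) * ρ ^ k) := by
    have h1 : Summable (fun k : ℕ => (k : ℝ) * ρ ^ k) := by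
      simpa using summable_pow_mul_geometric_of_norm_lt_one 1
        (by rwa [Real.norm_eq_abs, abs_of_pos hρ0] : ‖ρ‖ < 1)
    have h2 : Summable (fun k : ℕ => ρ ^ k) := summable_geometric_of_lt_one hρ0.le hρ1
    simpa [add_mul] using h1.add h2
  apply hasDerivAt_tsum_of_isPreconnected
    (u := fun k : ℕ => ((k : ℝ) + 1) * ρ ^ k)
    (g := fun (k : ℕ) (s : ℝ) => (s : ℂ) ^ (k + 1) / ((k + 1 : ℕ) : ℂ) ^ j)
    (g' := fun (k : ℕ) (s : ℝ) => ((k + 1 : ℕ) : ℂ) * (s : ℂ) ^ k / ((k + 1 : ℕ) : ℂ) ^ j)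
    hsum isOpen_Ioo isPreconnected_Ioo (t := Set.Ioo (0:ℝ) ρ)
    (fun k s _ => term_hasDerivAt j k s) ?_ ⟨ht0, htρ⟩ ?_ ⟨ht0, htρ⟩
  · intro k s hs
    have hk1 : (1:ℝ) ≤ ((k+1:ℕ):ℝ) ^ j :=
      one_le_pow₀ (by exact_mod_cast Nat.succ_le_succ (Nat.zero_le k))
    rw [norm_div, norm_mul, norm_pow, norm_pow, Complex.norm_natCast,
      Complex.norm_real, Real.norm_eq_abs, abs_of_pos hs.1]
    calc (↑(k+1) : ℝ) * s ^ k / ((k+1:ℕ):ℝ) ^ j ≤ (↑(k+1) : ℝ) * ρ ^ k / 1 := by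
          gcongr
          · exact hs.1.le
          · exact hs.2.le
      _ = ((k:ℝ) + 1) * ρ ^ k := by push_cast; ring
  · apply Summable.of_norm
    apply Summable.of_nonneg_of_le (fun k => norm_nonneg _) (fun k => ?_)
      ((summable_geometric_of_lt_one ht0.le ht1).mul_left t)
    rw [norm_div, norm_pow, norm_pow, Complex.norm_real, Real.norm_eq_abs, abs_of_pos ht0,
      Complex.norm_natCast]
    calc t ^ (k+1) / ((k+1:ℕ):ℝ) ^ j ≤ t ^ (k+1) / 1 := by
          gcongr
          · exact one_le_pow₀ (by exact_mod_cast Nat.succ_le_succ (Nat.zero_le k))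
      _ = t * t ^ k := by rw [div_one, pow_succ]; ring

lemma hasDerivAt_LiSeries_one {t : ℝ} (ht : t ∈ Set.Ioo (0 : ℝ) 1) :
    HasDerivAt (fun s : ℝ => LiSeries 1 s) (1 / (1 - (t : ℂ))) t := by
  have h := hasDerivAt_LiSeries 1 ht
  convert h using 1
  have hnorm : ‖(t : ℂ)‖ < 1 := by
    rw [Complex.norm_real, Real.norm_eq_abs, abs_of_pos ht.1]; exact ht.2
  rw [one_div, ← tsum_geometric_of_norm_lt_one hnorm]
  apply tsum_congr
  intro k
  have hk : ((k + 1 : ℕ) : ℂ) ≠ 0 := by exact_mod_cast Nat.succ_ne_zero k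
  rw [pow_one, mul_comm, mul_div_assoc, div_self hk, mul_one]

lemma hasDerivAt_LiSeries_succ (j : ℕ) {t : ℝ} (ht : t ∈ Set.Ioo (0 : ℝ) 1) :
    HasDerivAt (fun s : ℝ => LiSeries (j + 1) s) (LiSeries j t / (t : ℂ)) t := by
  have h := hasDerivAt_LiSeries (j + 1) ht
  convert h using 1
  have ht0 : (t : ℂ) ≠ 0 := by exact_mod_cast ne_of_gt ht.1
  rw [div_eq_iff ht0]
  unfold LiSeries
  rw [← tsum_mul_right]
  apply tsum_congr
  intro k
  have hk : ((k + 1 : ℕ) : ℂ) ≠ 0 := by exact_mod_cast Nat.succ_ne_zero k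
  rw [div_mul_eq_mul_div, div_eq_div_iff (pow_ne_zero _ hk) (pow_ne_zero _ hk)]
  rw [pow_succ (((k+1:ℕ)):ℂ), pow_succ ((t:ℂ))]
  ring

lemma hasDerivAt_logpow (j : ℕ) {t : ℝ} (ht0 : 0 < t) :
    HasDerivAt (fun s : ℝ => (-Real.log s : ℂ) ^ j / (Nat.factorial j : ℂ))
      ((j : ℂ) * (-Real.log t : ℂ) ^ (j - 1) * (-(1 / (t : ℂ))) / (Nat.factorial j : ℂ)) t := by
  have hlog : HasDerivAt (fun s : ℝ => ((Real.log s : ℝ) : ℂ)) ((1 / t : ℝ) : ℂ) t := by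
    have := (Real.hasDerivAt_log (ne_of_gt ht0)).ofReal_comp
    simpa [one_div] using this
  have houter : HasDerivAt (fun z : ℂ => (-z) ^ j)
      ((j : ℂ) * (-(Real.log t : ℂ)) ^ (j - 1) * (-1)) ((Real.log t : ℝ) : ℂ) := by
    have h1 : HasDerivAt (fun z : ℂ => -z) (-1 : ℂ) ((Real.log t : ℝ) : ℂ) :=
      (hasDerivAt_id _).neg
    have h2 := hasDerivAt_pow j (-((Real.log t : ℝ) : ℂ))
    exact h2.comp _ h1
  have hcomp := (houter.comp t hlog).div_const ((Nat.factorial j : ℂ))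
  have heq : (fun s : ℝ => (-Real.log s : ℂ) ^ j / (Nat.factorial j : ℂ)) =
      ((fun z : ℂ => (-z) ^ j) ∘ fun s : ℝ => ((Real.log s : ℝ) : ℂ)) ∘ id / fun _ => (Nat.factorial j : ℂ) := by
    funext s
    simp [Function.comp]
  refine HasDerivAt.congr_deriv hcomp ?_
  push_cast
  ring

/-- For `k ≥ 1`, the function `Λ_k` is differentiable on `(0,1)` with derivative
`Λ_k'(t) = (-2πi)^{-k} · (-log t)^{k-1} / ((k-1)! · (1 - t))`. -/
theorem lambda_hasDerivAt (k : ℕ) (hk : 1 ≤ k) (t : ℝ) (ht : t ∈ Set.Ioo (0 : ℝ) 1) :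
    HasDerivAt (fun s : ℝ => Lambda k s)
      ((-(2 * Real.pi * Complex.I)) ^ (-(k : ℤ)) * (-Real.log t : ℂ) ^ (k - 1) /
        ((Nat.factorial (k - 1) : ℂ) * (1 - (t : ℂ)))) t := by
  obtain ⟨ht0, ht1⟩ := ht
  obtain ⟨n, rfl⟩ : ∃ n, k = n + 1 := ⟨k - 1, (Nat.succ_pred_eq_of_pos hk).symm⟩
  set X : ℂ := (-Real.log t : ℂ) with hX
  -- per-term derivatives
  set P : ℕ → ℂ := fun m =>
    (((n + 1 - (m + 1) : ℕ)) : ℂ) * X ^ (n + 1 - (m + 1) - 1) * (-(1 / (t : ℂ))) /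
      (Nat.factorial (n + 1 - (m + 1)) : ℂ) * LiSeries (m + 1) t with hP
  set Ld : ℕ → ℂ := fun m => if m = 0 then 1 / (1 - (t : ℂ)) else LiSeries m t / (t : ℂ) with hLd
  set Q : ℕ → ℂ := fun m =>
    (X ^ (n + 1 - (m + 1)) / (Nat.factorial (n + 1 - (m + 1)) : ℂ)) * Ld m with hQ
  have hg : ∀ m, HasDerivAt
      (fun s : ℝ => ((-Real.log s : ℂ) ^ (n + 1 - (m + 1)) / (Nat.factorial (n + 1 - (m + 1)) : ℂ)) *
        LiSeries (m + 1) s) (P m + Q m) t := by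
    intro m
    have hA := hasDerivAt_logpow (n + 1 - (m + 1)) ht0
    have hLi : HasDerivAt (fun s : ℝ => LiSeries (m + 1) s) (Ld m) t := by
      rcases m with _ | m'
      · simpa [hLd] using hasDerivAt_LiSeries_one ⟨ht0, ht1⟩
      · simpa [hLd] using hasDerivAt_LiSeries_succ (m' + 1) ⟨ht0, ht1⟩
    simpa [hP, hQ, hX] using hA.fun_mul hLi
  have hF : HasDerivAt (fun s : ℝ => ∑ m ∈ Finset.range (n + 1),
      ((-Real.log s : ℂ) ^ (n + 1 - (m + 1)) / (Nat.factorial (n + 1 - (m + 1)) : ℂ)) *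
        LiSeries (m + 1) s) (∑ m ∈ Finset.range (n + 1), (P m + Q m)) t :=
    HasDerivAt.fun_sum fun m _ => hg m
  -- telescoping
  have hsum : ∑ m ∈ Finset.range (n + 1), (P m + Q m)
      = (X ^ n / (Nat.factorial n : ℂ)) * (1 / (1 - (t : ℂ))) := by
    rw [Finset.sum_add_distrib]
    have hPn : P n = 0 := by simp [hP]
    have hPsum : ∑ m ∈ Finset.range (n + 1), P m = ∑ m ∈ Finset.range n, P m := by
      rw [Finset.sum_range_succ, hPn, add_zero]
    have hQsum : ∑ m ∈ Finset.range (n + 1), Q m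
        = (∑ m ∈ Finset.range n, Q (m + 1)) + Q 0 := Finset.sum_range_succ' Q n
    have hQP : ∀ m ∈ Finset.range n, Q (m + 1) = -P m := by
      intro m hm
      rw [Finset.mem_range] at hm
      have h1 : n + 1 - (m + 1 + 1) = n - m - 1 := by omega
      have h2 : n + 1 - (m + 1) = n - m := by omega
      have h3 : 1 ≤ n - m := by omega
      have hfac : ((n - m : ℕ) : ℂ) * ((Nat.factorial (n - m - 1)) : ℂ)
          = ((Nat.factorial (n - m)) : ℂ) := by
        rw [← Nat.cast_mul]
        congr 1
        calc (n - m) * (n - m - 1)! = ((n - m - 1) + 1) * (n - m - 1)! := by congr 1; omega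
          _ = ((n - m - 1) + 1)! := (Nat.factorial_succ _).symm
          _ = (n - m)! := by congr 1; omega
      have hm1 : (m + 1 : ℕ) ≠ 0 := Nat.succ_ne_zero m
      rw [hQ, hP, hLd]
      simp only [hm1, if_neg, if_false, h1, h2]
      have htne : (t : ℂ) ≠ 0 := by exact_mod_cast ne_of_gt ht0
      have hfne : ((Nat.factorial (n - m)) : ℂ) ≠ 0 := by
        exact_mod_cast Nat.factorial_ne_zero _
      have hfne' : ((Nat.factorial (n - m - 1)) : ℂ) ≠ 0 := by
        exact_mod_cast Nat.factorial_ne_zero _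
      field_simp
      rw [← hfac]
      ring
    rw [hPsum, hQsum, Finset.sum_congr rfl hQP]
    simp only [Finset.sum_neg_distrib]
    rw [← add_assoc, add_neg_cancel, zero_add]
    simp [hQ, hLd]
  -- assemble
  have hmain := hF.const_mul (1 / (-(2 * Real.pi * Complex.I)) ^ (n + 1))
  rw [hsum] at hmain
  have : (fun s : ℝ => Lambda (n + 1) s)
      = fun s : ℝ => (1 / (-(2 * Real.pi * Complex.I)) ^ (n + 1)) *
        ∑ m ∈ Finset.range (n + 1),
          ((-Real.log s : ℂ) ^ (n + 1 - (m + 1)) / (Nat.factorial (n + 1 - (m + 1)) : ℂ)) *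
            LiSeries (m + 1) s := rfl
  rw [this]
  refine HasDerivAt.congr_deriv hmain ?_
  symm
  rw [zpow_neg, zpow_natCast]
  simp only [Nat.add_sub_cancel]
  rw [one_div, div_eq_mul_inv, mul_inv]
  ring
end

section
/- Let V be a finite-dimensional complex vector space equipped with a finite exhaustive increasing filtration W_• by subspaces and a finite exhaustive decreasing filtration F^• by subspaces, such that for every pair of integers (p, n) with n ≠ 2p the p-th graded piece of the filtration induced by F^• on Gr^W_n V vanishes (i.e. the induced F-grading on Gr^W_n V is concentrated in degree n/2). Then V decomposes as the direct sum V = ⊕_p (F^p ∩ W_{2p}), and for each p the natural map F^p ∩ W_{2p} → Gr^W_{2p} V is an isomorphism. (This is the fiberwise statement that the bifiltered vector bundle underlying a variation of Tate–Hodge structure is canonically split.) -/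
section Aux
variable {V : Type*} [AddCommGroup V] [Module ℂ V]

lemma tate_chain (W F : ℤ → Submodule ℂ V)
    (hTate : ∀ p n : ℤ, n ≠ 2 * p →
      ((F p ⊓ W n) ⊔ W (n - 1)) = ((F (p + 1) ⊓ W n) ⊔ W (n - 1)))
    (n p q : ℤ) (hpq : p ≤ q) (h : ∀ r, p ≤ r → r < q → n ≠ 2 * r) :
    (F p ⊓ W n) ⊔ W (n - 1) = (F q ⊓ W n) ⊔ W (n - 1) := by
  refine Int.le_induction (motive := fun q _ => (∀ r, p ≤ r → r < q → n ≠ 2 * r) →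
      (F p ⊓ W n) ⊔ W (n - 1) = (F q ⊓ W n) ⊔ W (n - 1)) ?_ ?_ q hpq h
  · intro _; rfl
  · intro q hq ih h
    rw [ih (fun r h1 h2 => h r h1 (by omega)), hTate q n (h q hq (by omega))]

lemma tate_bot (W F : ℤ → Submodule ℂ V) (hW : Monotone W) (hF : Antitone F)
    (hWbot : ∃ n : ℤ, W n = ⊥) (hFbot : ∃ p : ℤ, F p = ⊥)
    (hTate : ∀ p n : ℤ, n ≠ 2 * p →
      ((F p ⊓ W n) ⊔ W (n - 1)) = ((F (p + 1) ⊓ W n) ⊔ W (n - 1)))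
    (p n : ℤ) (hn : n < 2 * p) : F p ⊓ W n = ⊥ := by
  obtain ⟨n0, hn0⟩ := hWbot
  obtain ⟨q0, hq0⟩ := hFbot
  have hq : F (max p q0) = ⊥ := le_bot_iff.mp (hq0 ▸ hF (le_max_right p q0))
  have key : ∀ m, n0 ≤ m → m < 2 * p → F p ⊓ W m = ⊥ := by
    intro m hm
    refine Int.le_induction (motive := fun m _ => m < 2 * p → F p ⊓ W m = ⊥) ?_ ?_ m hm
    · intro _; rw [hn0, inf_bot_eq]
    · intro m hm ih hlt
      have hle : F p ⊓ W (m + 1) ≤ W m := by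
        have hc := tate_chain W F hTate (m + 1) p (max p q0) (le_max_left _ _)
          (fun r h1 h2 => by omega)
        rw [hq, bot_inf_eq, bot_sup_eq] at hc
        have : (m + 1 : ℤ) - 1 = m := by ring
        rw [this] at hc
        exact le_trans le_sup_left (le_of_eq hc)
      have : F p ⊓ W (m + 1) ≤ F p ⊓ W m :=
        le_inf inf_le_left hle
      exact le_bot_iff.mp (this.trans (le_of_eq (ih (by omega))))
  by_cases hc : n0 ≤ n
  · exact key n hc hn
  · have : F p ⊓ W n ≤ W n0 := le_trans inf_le_right (hW (by omega))
    rw [hn0] at this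
    exact le_bot_iff.mp this

lemma tate_surj (W F : ℤ → Submodule ℂ V) (hW : Monotone W) (hF : Antitone F)
    (hFtop : ∃ p : ℤ, F p = ⊤)
    (hTate : ∀ p n : ℤ, n ≠ 2 * p →
      ((F p ⊓ W n) ⊔ W (n - 1)) = ((F (p + 1) ⊓ W n) ⊔ W (n - 1)))
    (p : ℤ) : (F p ⊓ W (2 * p)) ⊔ W (2 * p - 1) = W (2 * p) := by
  obtain ⟨p0, hp0⟩ := hFtop
  have htop : F (min p0 p) = ⊤ := top_le_iff.mp (hp0 ▸ hF (min_le_left _ _))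
  have hc := tate_chain W F hTate (2 * p) (min p0 p) p (min_le_right _ _)
    (fun r h1 h2 => by omega)
  rw [htop, top_inf_eq, sup_eq_left.mpr (hW (by omega))] at hc
  exact hc.symm

lemma tate_odd (W F : ℤ → Submodule ℂ V) (hW : Monotone W) (hF : Antitone F)
    (hFtop : ∃ p : ℤ, F p = ⊤) (hFbot : ∃ p : ℤ, F p = ⊥)
    (hTate : ∀ p n : ℤ, n ≠ 2 * p →
      ((F p ⊓ W n) ⊔ W (n - 1)) = ((F (p + 1) ⊓ W n) ⊔ W (n - 1)))
    (n : ℤ) (hodd : Odd n) : W n = W (n - 1) := by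
  obtain ⟨p0, hp0⟩ := hFtop
  obtain ⟨q0, hq0⟩ := hFbot
  have htop : F (min p0 q0) = ⊤ := top_le_iff.mp (hp0 ▸ hF (min_le_left _ _))
  have hbot : F (max q0 (min p0 q0)) = ⊥ := le_bot_iff.mp (hq0 ▸ hF (le_max_left _ _))
  obtain ⟨k, hk⟩ := hodd
  have hc := tate_chain W F hTate n (min p0 q0) (max q0 (min p0 q0)) (le_max_right _ _)
    (fun r h1 h2 => by omega)
  rw [htop, top_inf_eq, sup_eq_left.mpr (hW (by omega)), hbot, bot_inf_eq, bot_sup_eq] at hc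
  exact hc

end Aux

/-- Let `V` be a finite-dimensional complex vector space with a finite exhaustive increasing
filtration `W` and a finite exhaustive decreasing filtration `F`, such that for every pair
`(p, n)` with `n ≠ 2p` the `p`-th graded piece of the filtration induced by `F` on `Gr^W_n V`
vanishes (expressed as the equality `(F^p ⊓ W_n) ⊔ W_{n-1} = (F^{p+1} ⊓ W_n) ⊔ W_{n-1}`).
Then `V = ⊕_p (F^p ∩ W_{2p})`, and for each `p` the natural map
`F^p ∩ W_{2p} → Gr^W_{2p} V = W_{2p}/W_{2p-1}` (induced by the quotient map
`V → V/W_{2p-1}`) is injective with image `W_{2p}/W_{2p-1}`. -/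
theorem tate_bifiltration_splits (V : Type*) [AddCommGroup V] [Module ℂ V]
    [FiniteDimensional ℂ V]
    (W : ℤ → Submodule ℂ V) (F : ℤ → Submodule ℂ V)
    (hW : Monotone W) (hF : Antitone F)
    (hWbot : ∃ n : ℤ, W n = ⊥) (hWtop : ∃ n : ℤ, W n = ⊤)
    (hFtop : ∃ p : ℤ, F p = ⊤) (hFbot : ∃ p : ℤ, F p = ⊥)
    (hTate : ∀ p n : ℤ, n ≠ 2 * p →
      ((F p ⊓ W n) ⊔ W (n - 1)) = ((F (p + 1) ⊓ W n) ⊔ W (n - 1))) :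
    DirectSum.IsInternal (fun p : ℤ => F p ⊓ W (2 * p)) ∧
    ∀ p : ℤ,
      Function.Injective ((W (2 * p - 1)).mkQ ∘ₗ (F p ⊓ W (2 * p)).subtype) ∧
      LinearMap.range ((W (2 * p - 1)).mkQ ∘ₗ (F p ⊓ W (2 * p)).subtype) =
        Submodule.map (W (2 * p - 1)).mkQ (W (2 * p)) := by
  set U : ℤ → Submodule ℂ V := fun p => F p ⊓ W (2 * p) with hU
  have hbot := tate_bot W F hW hF hWbot hFbot hTate
  have hsurj := tate_surj W F hW hF hFtop hTate
  constructor
  · rw [DirectSum.isInternal_submodule_iff_iSupIndep_and_iSup_eq_top]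
    constructor
    · -- independence
      intro p
      rw [disjoint_iff]
      have hle : (⨆ q, ⨆ (_ : q ≠ p), U q) ≤ F (p + 1) ⊔ W (2 * p - 2) := by
        refine iSup_le fun q => iSup_le fun hq => ?_
        rcases lt_or_gt_of_ne hq with h | h
        · exact le_sup_of_le_right (le_trans inf_le_right (hW (by omega)))
        · exact le_sup_of_le_left (le_trans inf_le_left (hF (by omega)))
      refine le_bot_iff.mp (le_trans (inf_le_inf_left _ hle) ?_)
      intro x hx
      obtain ⟨⟨hxF, hxW⟩, hx2⟩ := hx
      obtain ⟨y, hy, z, hz, hyz⟩ := Submodule.mem_sup.mp hx2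
      have hyW : y ∈ W (2 * p) := by
        have : y = x - z := by rw [← hyz]; abel
        rw [this]
        exact Submodule.sub_mem _ hxW (hW (by omega) hz)
      have hy0 : y = 0 := by
        have : y ∈ F (p + 1) ⊓ W (2 * p) := ⟨hy, hyW⟩
        rw [hbot (p + 1) (2 * p) (by omega)] at this
        exact this
      have hx0 : x ∈ F p ⊓ W (2 * p - 2) := ⟨hxF, by rw [← hyz, hy0, zero_add]; exact hz⟩
      rw [hbot p (2 * p - 2) (by omega)] at hx0
      exact hx0
    · -- supremum is top
      obtain ⟨n0, hn0⟩ := hWbot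
      obtain ⟨n1, hn1⟩ := hWtop
      have key : ∀ m : ℤ, n0 ≤ m → W m ≤ ⨆ p, U p := by
        intro m hm
        refine Int.le_induction (motive := fun m _ => W m ≤ ⨆ p, U p) ?_ ?_ m hm
        · show W n0 ≤ _
          rw [hn0]; exact bot_le
        · intro m _ ih
          rcases Int.even_or_odd (m + 1) with ⟨k, hk⟩ | hodd
          · have hk' : m + 1 = 2 * k := by omega
            rw [hk', ← hsurj k]
            refine sup_le (le_iSup U k) ?_
            have : (2 : ℤ) * k - 1 = m := by omega
            rw [this]; exact ih
          · have := tate_odd W F hW hF hFtop hFbot hTate (m + 1) hodd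
            have h1 : (m + 1 : ℤ) - 1 = m := by ring
            rw [this, h1]; exact ih
      refine top_le_iff.mp ?_
      calc (⊤ : Submodule ℂ V) = W n1 := hn1.symm
        _ ≤ W (max n1 n0) := hW (le_max_left _ _)
        _ ≤ ⨆ p, U p := key _ (le_max_right _ _)
  · intro p
    constructor
    · rw [← LinearMap.ker_eq_bot]
      rw [Submodule.eq_bot_iff]
      rintro ⟨x, hxF, hxW⟩ hx
      simp only [LinearMap.mem_ker, LinearMap.comp_apply, Submodule.subtype_apply,
        Submodule.mkQ_apply, Submodule.Quotient.mk_eq_zero] at hx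
      have : x ∈ F p ⊓ W (2 * p - 1) := ⟨hxF, hx⟩
      rw [hbot p (2 * p - 1) (by omega)] at this
      exact Subtype.ext this
    · rw [LinearMap.range_comp, Submodule.range_subtype]
      conv_rhs => rw [← hsurj p]
      rw [Submodule.map_sup]
      have hmap : Submodule.map (W (2 * p - 1)).mkQ (W (2 * p - 1)) = ⊥ :=
        le_bot_iff.mp (Submodule.map_le_iff_le_comap.mpr
          (by rw [Submodule.comap_bot, Submodule.ker_mkQ]))
      rw [hmap, sup_bot_eq]
end
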